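/- Let s, r ≥ 0 with s + r ≥ 1, let K_1, …, K_s and F_1, …, F_r be finite fields, let d_1, …, d_r be integers with each d_j ≥ 2, and let R = K_1 × ⋯ × K_s × M_{d_1}(F_1) × ⋯ × M_{d_r}(F_r). Then the unitary Cayley graph G_R is connected if and only if there is at most one index i ∈ {1,…,s} with |K_i| = 2. -/

import Mathlib

/-- The unitary Cayley graph of a ring `R`: distinct vertices `a, b` are adjacent iff
`a - b` is a unit. -/
def unitaryCayleyGraph (R : Type*) [Ring R] : SimpleGraph R :=
  SimpleGraph.fromRel (fun a b => IsUnit (a - b))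

namespace UCG

variable {R : Type*} [Ring R]

/-- `x` is a sum of `n` units. -/
def SumU (n : ℕ) (x : R) : Prop :=
  ∃ u : Fin n → R, (∀ k, IsUnit (u k)) ∧ ∑ k, u k = x

lemma sumU_zero : SumU 0 (0 : R) := ⟨fun _ => 1, by simp, by simp⟩

lemma sumU_one {x : R} (h : IsUnit x) : SumU 1 x := ⟨fun _ => x, fun _ => h, by simp⟩

lemma SumU.add {m n : ℕ} {x y : R} (hx : SumU m x) (hy : SumU n y) :
    SumU (m + n) (x + y) := by
  obtain ⟨u, hu, hus⟩ := hx
  obtain ⟨v, hv, hvs⟩ := hy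
  refine ⟨Fin.append u v, ?_, ?_⟩
  · intro k
    refine Fin.addCases (fun k0 => ?_) (fun k1 => ?_) k <;>
      simp [Fin.append_left, Fin.append_right, hu _, hv _]
  · rw [Fin.sum_univ_add]
    simp [Fin.append_left, Fin.append_right, hus, hvs]

lemma SumU.neg {n : ℕ} {x : R} (hx : SumU n x) : SumU n (-x) := by
  obtain ⟨u, hu, hus⟩ := hx
  refine ⟨fun k => -u k, fun k => (hu k).neg, ?_⟩
  rw [← hus]
  exact Finset.sum_neg_distrib _

lemma SumU.map {S : Type*} [Ring S] (f : R →+* S) {n : ℕ} {x : R} (hx : SumU n x) :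
    SumU n (f x) := by
  obtain ⟨u, hu, hus⟩ := hx
  exact ⟨fun k => f (u k), fun k => (hu k).map f, by rw [← map_sum, hus]⟩

lemma adj_iff {a b : R} : (unitaryCayleyGraph R).Adj a b ↔ a ≠ b ∧ IsUnit (a - b) := by
  rw [unitaryCayleyGraph, SimpleGraph.fromRel_adj]
  constructor
  · rintro ⟨h, h' | h'⟩
    · exact ⟨h, h'⟩
    · refine ⟨h, ?_⟩
      have := h'.neg
      rwa [neg_sub] at this
  · rintro ⟨h, h'⟩
    exact ⟨h, Or.inl h'⟩

lemma walk_sum {a b : R} (w : (unitaryCayleyGraph R).Walk a b) : ∃ n, SumU n (b - a) := by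
  induction w with
  | nil => exact ⟨0, by simpa using sumU_zero⟩
  | @cons a c b h _ ih =>
    obtain ⟨n, hn⟩ := ih
    have hca : IsUnit (c - a) := by
      have := (adj_iff.1 h).2
      have h2 := this.neg
      rwa [neg_sub] at h2
    refine ⟨n + 1, ?_⟩
    have := hn.add (sumU_one hca)
    rwa [sub_add_sub_cancel] at this

lemma conn_iff [Nontrivial R] :
    (unitaryCayleyGraph R).Connected ↔ ∀ x : R, ∃ n, SumU n x := by
  constructor
  · intro h x
    obtain ⟨w⟩ := h.preconnected 0 x
    simpa using walk_sum w
  · intro h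
    have key : ∀ x : R, (unitaryCayleyGraph R).Reachable 0 x := by
      intro x
      obtain ⟨n, u, hu, hus⟩ := h x
      clear hus
      have : ∀ m : ℕ, ∀ u : Fin m → R, (∀ k, IsUnit (u k)) →
          (unitaryCayleyGraph R).Reachable 0 (∑ k, u k) := by
        intro m
        induction m with
        | zero =>
          intro u _
          simpa using SimpleGraph.Reachable.refl (0 : R)
        | succ m ih =>
          intro u hu
          rw [Fin.sum_univ_succ]
          have h1 : (unitaryCayleyGraph R).Reachable 0 (∑ k : Fin m, u k.succ) :=
            ih (fun k => u k.succ) (fun k => hu _)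
          have h0 : u 0 ≠ 0 := by
            intro h0
            have := hu 0
            rw [h0, isUnit_zero_iff] at this
            exact zero_ne_one (α := R) this
          have hadj : (unitaryCayleyGraph R).Adj (∑ k : Fin m, u k.succ)
              (u 0 + ∑ k : Fin m, u k.succ) := by
            rw [adj_iff]
            constructor
            · intro hh
              exact h0 (right_eq_add.mp hh)
            · have : (∑ k : Fin m, u k.succ) - (u 0 + ∑ k : Fin m, u k.succ) = -(u 0) := by abel
              rw [this]
              exact (hu 0).neg
          exact h1.trans hadj.reachable
      obtain ⟨n, u, hu, hus⟩ := h x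
      rw [← hus]
      exact this n u hu
    refine ⟨fun a b => ((key a).symm.trans (key b))⟩

section FieldLemmas

variable {K : Type*} [Field K] [Fintype K]

lemma card_two_isUnit_eq_one (hK : Fintype.card K = 2) {x : K} (hx : IsUnit x) : x = 1 := by
  classical
  have h1 : Fintype.card Kˣ = 1 := by rw [Fintype.card_units, hK]
  haveI : Subsingleton Kˣ := Fintype.card_le_one_iff_subsingleton.mp h1.le
  obtain ⟨v, rfl⟩ := hx
  rw [Subsingleton.elim v 1, Units.val_one]

lemma card_two_eq_zero_or_one (hK : Fintype.card K = 2) (x : K) : x = 0 ∨ x = 1 := by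
  by_cases h : x = 0
  · exact Or.inl h
  · exact Or.inr (card_two_isUnit_eq_one hK (isUnit_iff_ne_zero.mpr h))

lemma card_two_one_add_one (hK : Fintype.card K = 2) : (1 : K) + 1 = 0 := by
  rcases card_two_eq_zero_or_one hK (1 + 1) with h | h
  · exact h
  · exact absurd (add_eq_right.mp h) one_ne_zero

lemma card_two_cast (hK : Fintype.card K = 2) (n : ℕ) :
    (n : K) = if Even n then 0 else 1 := by
  induction n with
  | zero => simp
  | succ n ih =>
    rw [Nat.cast_succ, ih]
    by_cases h : Even n
    · simp [h, Nat.even_add_one]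
    · simp [h, Nat.even_add_one, card_two_one_add_one hK]

lemma card_two_sumU_iff (hK : Fintype.card K = 2) {n : ℕ} {x : K} :
    SumU n x ↔ (n : K) = x := by
  constructor
  · rintro ⟨u, hu, hus⟩
    have h1 : ∀ k, u k = 1 := fun k => card_two_isUnit_eq_one hK (hu k)
    calc (n : K) = ∑ _k : Fin n, (1 : K) := by
          simp [Finset.sum_const, nsmul_eq_mul]
      _ = ∑ k, u k := by simp [h1]
      _ = x := hus
  · intro h
    exact ⟨fun _ => 1, fun _ => isUnit_one, by
      simp [Finset.sum_const, nsmul_eq_mul, h]⟩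

lemma card_ge_three_sumU (hK : 3 ≤ Fintype.card K) :
    ∀ n, 2 ≤ n → ∀ x : K, SumU n x := by
  intro n hn
  induction n, hn using Nat.le_induction with
  | base =>
    intro x
    classical
    have hex : ∃ u : K, u ≠ 0 ∧ u ≠ x := by
      by_contra hc
      push_neg at hc
      have hsub : (Finset.univ : Finset K) ⊆ {0, x} := by
        intro u _
        by_cases h0 : u = 0
        · simp [h0]
        · simp [hc u h0]
      have := Finset.card_le_card hsub
      rw [Finset.card_univ] at this
      have h2 : ({0, x} : Finset K).card ≤ 2 :=
        (Finset.card_insert_le _ _).trans (by simp)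
      omega
    obtain ⟨u, hu0, hux⟩ := hex
    have h1 : IsUnit u := isUnit_iff_ne_zero.mpr hu0
    have h2 : IsUnit (x - u) := isUnit_iff_ne_zero.mpr
      (sub_ne_zero_of_ne (fun h => hux h.symm))
    have := (sumU_one h1).add (sumU_one h2)
    rwa [add_sub_cancel] at this
  | succ n hn ih =>
    intro x
    have := (sumU_one (isUnit_one (M := K))).add (ih (x - 1))
    rwa [add_sub_cancel, Nat.add_comm 1 n] at this

end FieldLemmas

section ProductLemmas

lemma isUnit_pi {ι : Type*} {A : ι → Type*} [∀ i, Ring (A i)] {f : ∀ i, A i}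
    (h : ∀ i, IsUnit (f i)) : IsUnit f := by
  choose g hg1 hg2 using fun i => isUnit_iff_exists.mp (h i)
  exact isUnit_iff_exists.mpr ⟨fun i => g i, funext hg1, funext hg2⟩

lemma sumU_pi {ι : Type*} [Fintype ι] {A : ι → Type*} [∀ i, Ring (A i)] {n : ℕ}
    {x : ∀ i, A i} (h : ∀ i, SumU n (x i)) : SumU n x := by
  choose u hu hsum using h
  refine ⟨fun k i => u i k, fun k => isUnit_pi (fun i => hu i k), ?_⟩
  funext i
  rw [Finset.sum_apply]
  exact hsum i

lemma isUnit_prod {A B : Type*} [Ring A] [Ring B] {a : A} {b : B}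
    (ha : IsUnit a) (hb : IsUnit b) : IsUnit (a, b) := by
  obtain ⟨a', ha1, ha2⟩ := isUnit_iff_exists.mp ha
  obtain ⟨b', hb1, hb2⟩ := isUnit_iff_exists.mp hb
  exact isUnit_iff_exists.mpr ⟨(a', b'), by simp [Prod.ext_iff, ha1, hb1],
    by simp [Prod.ext_iff, ha2, hb2]⟩

lemma sumU_prod {A B : Type*} [Ring A] [Ring B] {n : ℕ} {x : A × B}
    (h1 : SumU n x.1) (h2 : SumU n x.2) : SumU n x := by
  obtain ⟨u, hu, hus⟩ := h1
  obtain ⟨v, hv, hvs⟩ := h2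
  refine ⟨fun k => (u k, v k), fun k => isUnit_prod (hu k) (hv k), ?_⟩
  refine Prod.ext ?_ ?_
  · rw [Prod.fst_sum]; simpa using hus
  · rw [Prod.snd_sum]; simpa using hvs

end ProductLemmas

section MatrixLemmas

open Matrix

variable {F : Type*} [Field F]

lemma isUnit_transvection {m : ℕ} {i j : Fin m} (h : i ≠ j) (c : F) :
    IsUnit (Matrix.transvection i j c) := by
  rw [Matrix.isUnit_iff_isUnit_det, Matrix.det_transvection_of_ne i j h c]
  exact isUnit_one

lemma stdBasis_sumU {m : ℕ} (hm : 2 ≤ m) (i j : Fin m) (a : F) :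
    ∃ n, SumU n (Matrix.single i j a) := by
  by_cases hij : i = j
  · subst hij
    obtain ⟨k, hk⟩ : ∃ k : Fin m, k ≠ i := by
      by_cases h0 : i = ⟨0, by omega⟩
      · exact ⟨⟨1, by omega⟩, by rw [h0]; simp [Fin.ext_iff]⟩
      · exact ⟨⟨0, by omega⟩, fun h => h0 h.symm⟩
    set T1 := Matrix.transvection i k a with hT1def
    set T2 := Matrix.transvection k i (1 : F) with hT2def
    have hT1 : IsUnit T1 := isUnit_transvection hk.symm a
    have hT2 : IsUnit T2 := isUnit_transvection hk 1
    have key : Matrix.single i i a = T1 * T2 + -T1 + -T2 + 1 := by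
      have e1 : T1 * T2 + -T1 + -T2 + 1 = (T1 - 1) * (T2 - 1) := by noncomm_ring
      have e2 : T1 - 1 = Matrix.single i k a := by
        rw [hT1def, Matrix.transvection]; abel
      have e3 : T2 - 1 = Matrix.single k i (1 : F) := by
        rw [hT2def, Matrix.transvection]; abel
      rw [e1, e2, e3, Matrix.single_mul_single_same, mul_one]
    refine ⟨4, ?_⟩
    rw [key]
    simpa using (((sumU_one (hT1.mul hT2)).add (sumU_one hT1.neg)).add
      (sumU_one hT2.neg)).add (sumU_one isUnit_one)
  · refine ⟨2, ?_⟩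
    have key : Matrix.single i j a = Matrix.transvection i j a + -1 := by
      rw [Matrix.transvection]; abel
    rw [key]
    simpa using (sumU_one (isUnit_transvection hij a)).add
      (sumU_one (isUnit_one (M := Matrix (Fin m) (Fin m) F)).neg)

lemma matrix_ex_sumU {m : ℕ} (hm : 2 ≤ m) (A : Matrix (Fin m) (Fin m) F) :
    ∃ n, SumU n A := by
  let S : AddSubgroup (Matrix (Fin m) (Fin m) F) :=
    { carrier := {x | ∃ n, SumU n x}
      add_mem' := fun ⟨p, hp⟩ ⟨q, hq⟩ => ⟨p + q, hp.add hq⟩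
      zero_mem' := ⟨0, sumU_zero⟩
      neg_mem' := fun ⟨p, hp⟩ => ⟨p, hp.neg⟩ }
  have hmem : A ∈ S := by
    nth_rewrite 1 [Matrix.matrix_eq_sum_single A]
    refine AddSubgroup.sum_mem S fun i _ => AddSubgroup.sum_mem S fun j _ => ?_
    exact stdBasis_sumU hm i j (A i j)
  exact hmem

/-- The property that some unit `W` has `1 + W` also a unit. -/
def Good (F : Type*) [Field F] (k : ℕ) : Prop :=
  ∃ W : Matrix (Fin k) (Fin k) F, IsUnit W ∧ IsUnit (1 + W)

lemma good_two : Good F 2 := by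
  refine ⟨!![1, 1; 1, 0], ?_, ?_⟩
  · rw [Matrix.isUnit_iff_isUnit_det, Matrix.det_fin_two]
    norm_num
  · rw [Matrix.isUnit_iff_isUnit_det, Matrix.det_fin_two]
    simp [Matrix.one_apply]

lemma good_three : Good F 3 := by
  refine ⟨!![0, 0, 1; 1, 0, 1; 0, 1, 0], ?_, ?_⟩
  · rw [Matrix.isUnit_iff_isUnit_det, Matrix.det_fin_three]
    norm_num
    simp
  · rw [Matrix.isUnit_iff_isUnit_det, Matrix.det_fin_three]
    simp [Matrix.one_apply]

lemma good_step {k : ℕ} (hk : Good F k) : Good F (2 + k) := by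
  obtain ⟨A, hA, hA1⟩ := good_two (F := F)
  obtain ⟨B, hB, hB1⟩ := hk
  let φ := Matrix.reindexAlgEquiv F F (finSumFinEquiv (m := 2) (n := k))
  have hblock : ∀ (X : Matrix (Fin 2) (Fin 2) F) (Y : Matrix (Fin k) (Fin k) F),
      IsUnit X → IsUnit Y → IsUnit (Matrix.fromBlocks X 0 0 Y) := by
    intro X Y hX hY
    rw [Matrix.isUnit_iff_isUnit_det, Matrix.det_fromBlocks_zero₂₁]
    exact ((Matrix.isUnit_iff_isUnit_det X).mp hX).mul ((Matrix.isUnit_iff_isUnit_det Y).mp hY)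
  refine ⟨φ (Matrix.fromBlocks A 0 0 B), (hblock A B hA hB).map φ, ?_⟩
  have h1 : (1 : Matrix (Fin (2 + k)) (Fin (2 + k)) F) + φ (Matrix.fromBlocks A 0 0 B) =
      φ (Matrix.fromBlocks (1 + A) 0 0 (1 + B)) := by
    have : Matrix.fromBlocks (1 + A) (0 : Matrix (Fin 2) (Fin k) F)
        (0 : Matrix (Fin k) (Fin 2) F) (1 + B) =
        Matrix.fromBlocks 1 0 0 1 + Matrix.fromBlocks A 0 0 B := by
      rw [Matrix.fromBlocks_add]
      norm_num
    rw [this, map_add, Matrix.fromBlocks_one, _root_.map_one]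
  rw [h1]
  exact (hblock _ _ hA1 hB1).map φ

lemma good_of_two_le (m : ℕ) (hm : 2 ≤ m) : Good F m := by
  have aux : ∀ t : ℕ, Good F (2 + 2 * t) ∧ Good F (3 + 2 * t) := by
    intro t
    induction t with
    | zero => exact ⟨by simpa using good_two, by simpa using good_three⟩
    | succ t ih =>
      constructor
      · have : 2 + 2 * (t + 1) = 2 + (2 + 2 * t) := by ring
        rw [this]
        exact good_step ih.1
      · have : 3 + 2 * (t + 1) = 2 + (3 + 2 * t) := by ring
        rw [this]
        exact good_step ih.2
  rcases Nat.even_or_odd m with he | ho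
  · obtain ⟨t, rfl⟩ : ∃ t, m = 2 + 2 * t := by
      obtain ⟨c, hc⟩ := he
      exact ⟨c - 1, by omega⟩
    exact (aux _).1
  · obtain ⟨t, rfl⟩ : ∃ t, m = 3 + 2 * t := by
      obtain ⟨c, hc⟩ := ho
      exact ⟨c - 1, by omega⟩
    exact (aux _).2

lemma sumU_succ_of_good {R : Type*} [Ring R] {V : R} (hVu : IsUnit V)
    (hV : IsUnit (1 + V)) {n : ℕ} {x : R} (h : SumU (n + 1) x) : SumU (n + 2) x := by
  obtain ⟨u, hu, hus⟩ := h
  have hzmul : ((hV.unit⁻¹ : Rˣ) : R) * (1 + V) = 1 := hV.val_inv_mul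
  have hsplit : u (Fin.last n) = u (Fin.last n) * ↑hV.unit⁻¹ +
      u (Fin.last n) * ↑hV.unit⁻¹ * V := by
    have h2 : u (Fin.last n) * ↑hV.unit⁻¹ + u (Fin.last n) * ↑hV.unit⁻¹ * V
        = u (Fin.last n) * (↑hV.unit⁻¹ * (1 + V)) := by noncomm_ring
    rw [h2, hzmul, mul_one]
  have hB : SumU n (∑ k : Fin n, u k.castSucc) :=
    ⟨fun k => u k.castSucc, fun k => hu _, rfl⟩
  have h1 : IsUnit (u (Fin.last n) * ↑hV.unit⁻¹) := (hu _).mul (hV.unit⁻¹).isUnit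
  have h2 : IsUnit (u (Fin.last n) * ↑hV.unit⁻¹ * V) := h1.mul hVu
  have htot := (hB.add (sumU_one h1)).add (sumU_one h2)
  have hx : (∑ k : Fin n, u k.castSucc) + u (Fin.last n) * ↑hV.unit⁻¹ +
      u (Fin.last n) * ↑hV.unit⁻¹ * V = x := by
    rw [add_assoc, ← hsplit, ← Fin.sum_univ_castSucc, hus]
  rwa [hx] at htot

lemma sumU_add_two {R : Type*} [Ring R] {n : ℕ} {x : R} (h : SumU n x) :
    SumU (n + 2) x := by
  have h0 := (h.add (sumU_one (isUnit_one (M := R)))).add (sumU_one (isUnit_one (M := R)).neg)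
  have h2 : x + 1 + -1 = x := by abel
  rwa [h2] at h0

lemma matrix_sumU_all {m : ℕ} (hm : 2 ≤ m) (A : Matrix (Fin m) (Fin m) F) :
    ∃ n0, ∀ n ≥ n0, SumU n A := by
  obtain ⟨n1, hn1⟩ := matrix_ex_sumU hm A
  obtain ⟨W, hW, hW1⟩ := good_of_two_le (F := F) m hm
  refine ⟨n1 + 2, ?_⟩
  intro n hn
  induction n, hn using Nat.le_induction with
  | base => exact sumU_add_two hn1
  | succ n hn ih =>
    obtain ⟨k, rfl⟩ : ∃ k, n = k + 1 := ⟨n - 1, by omega⟩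
    exact sumU_succ_of_good hW hW1 ih

end MatrixLemmas

end UCG

theorem stmt7 (s r : ℕ) (hsr : 1 ≤ s + r)
    (K : Fin s → Type*) [∀ i, Field (K i)] [∀ i, Fintype (K i)]
    (F : Fin r → Type*) [∀ j, Field (F j)] [∀ j, Fintype (F j)]
    (d : Fin r → ℕ) (hd : ∀ j, 2 ≤ d j) :
    (unitaryCayleyGraph
        ((∀ i, K i) × ∀ j, Matrix (Fin (d j)) (Fin (d j)) (F j))).Connected ↔
      ∀ i₁ i₂ : Fin s, Fintype.card (K i₁) = 2 → Fintype.card (K i₂) = 2 → i₁ = i₂ := by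
  classical
  haveI : Nontrivial ((∀ i, K i) × ∀ j, Matrix (Fin (d j)) (Fin (d j)) (F j)) := by
    rcases Nat.lt_or_ge 0 s with hs | hs
    · refine ⟨(0, 0), (1, 1), fun h => ?_⟩
      have := congr_fun (congr_arg Prod.fst h) ⟨0, hs⟩
      exact zero_ne_one this
    · have hr : 0 < r := by omega
      refine ⟨(0, 0), (1, 1), fun h => ?_⟩
      have h1 := congr_fun (congr_arg Prod.snd h) ⟨0, hr⟩
      have hd0 : 0 < d ⟨0, hr⟩ := by have := hd ⟨0, hr⟩; omega
      have h2 := congr_fun (congr_fun h1 ⟨0, hd0⟩) ⟨0, hd0⟩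
      simp [Matrix.one_apply] at h2
  rw [UCG.conn_iff]
  constructor
  · -- connected implies at most one field of cardinality two
    intro h i₁ i₂ h1 h2
    by_contra hne
    set x : (∀ i, K i) × ∀ j, Matrix (Fin (d j)) (Fin (d j)) (F j) :=
      (fun i => if i = i₁ then 1 else 0, 0) with hx
    obtain ⟨n, hn⟩ := h x
    have hp0 : UCG.SumU n x.1 := hn.map (RingHom.fst _ _)
    have hp1 : UCG.SumU n (x.1 i₁) := hp0.map (Pi.evalRingHom K i₁)
    have hp2 : UCG.SumU n (x.1 i₂) := hp0.map (Pi.evalRingHom K i₂)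
    have e1 : x.1 i₁ = 1 := by simp [hx]
    have e2 : x.1 i₂ = 0 := by
      have h21 : i₂ ≠ i₁ := fun h => hne h.symm
      simp [hx, h21]
    rw [e1] at hp1
    rw [e2] at hp2
    have c1 : (n : K i₁) = 1 := (UCG.card_two_sumU_iff h1).mp hp1
    have c2 : (n : K i₂) = 0 := (UCG.card_two_sumU_iff h2).mp hp2
    rw [UCG.card_two_cast h1] at c1
    rw [UCG.card_two_cast h2] at c2
    by_cases he : Even n
    · rw [if_pos he] at c1
      exact zero_ne_one c1
    · rw [if_neg he] at c2
      exact one_ne_zero c2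
  · -- at most one field of cardinality two implies connected
    intro hcond x
    have hM : ∀ j, ∃ n0, ∀ n ≥ n0, UCG.SumU n (x.2 j) :=
      fun j => UCG.matrix_sumU_all (hd j) (x.2 j)
    choose N hN using hM
    set n1 : ℕ := max 2 (Finset.univ.sup N) with hn1
    have hn12 : 2 ≤ n1 := le_max_left _ _
    have hn1N : ∀ j, N j ≤ n1 :=
      fun j => le_trans (Finset.le_sup (Finset.mem_univ j)) (le_max_right _ _)
    have main : ∀ n, 2 ≤ n → (∀ j, N j ≤ n) →
        (∀ i, Fintype.card (K i) = 2 → (n : K i) = x.1 i) → UCG.SumU n x := by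
      intro n hn2 hnN hpar
      refine UCG.sumU_prod (UCG.sumU_pi fun i => ?_) (UCG.sumU_pi fun j => ?_)
      · by_cases hc : Fintype.card (K i) = 2
        · exact (UCG.card_two_sumU_iff hc).mpr (hpar i hc)
        · have h3 : 3 ≤ Fintype.card (K i) := by
            have := Fintype.one_lt_card (α := K i)
            omega
          exact UCG.card_ge_three_sumU h3 n hn2 _
      · exact hN j n (hnN j)
    by_cases hb : ∃ i, Fintype.card (K i) = 2 ∧ x.1 i ≠ ((n1 : ℕ) : K i)
    · obtain ⟨i0, hi0c, hi0x⟩ := hb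
      refine ⟨n1 + 1, main (n1 + 1) (by omega) (fun j => by have := hn1N j; omega) ?_⟩
      intro i hic
      have hii0 : i = i0 := hcond i i0 hic hi0c
      subst hii0
      rw [Nat.cast_add, Nat.cast_one]
      rcases UCG.card_two_eq_zero_or_one hic ((n1 : ℕ) : K i) with hc | hc
      · rcases UCG.card_two_eq_zero_or_one hic (x.1 i) with hx | hx
        · exact absurd (hx.trans hc.symm) hi0x
        · rw [hc, zero_add, hx]
      · rcases UCG.card_two_eq_zero_or_one hic (x.1 i) with hx | hx
        · rw [hc, UCG.card_two_one_add_one hic, hx]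
        · exact absurd (hx.trans hc.symm) hi0x
    · push_neg at hb
      exact ⟨n1, main n1 hn12 hn1N (fun i hic => (hb i hic).symm)⟩
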